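/- Let G be a row-finite directed graph and let (E, v_0) be a 1-sink extension of G. Then every maximal tail of E is contained in G^0, and a subset γ ⊆ G^0 is a maximal tail in E if and only if it is a maximal tail in G. -/

import Mathlib

/-- A directed graph realized inside ambient vertex type `V` and edge type `E`,
with globally given source and range maps. -/
structure DGraph (V E : Type*) where
  verts : Set V
  edges : Set E

variable {V E : Type*}

/-- The endpoints of every edge of the graph are vertices of the graph. -/
def WellFormed (s r : E → V) (G : DGraph V E) : Prop :=
  ∀ e ∈ G.edges, s e ∈ G.verts ∧ r e ∈ G.verts

/-- Row-finite: every vertex emits only finitely many edges. -/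
def RowFinite (s : E → V) (G : DGraph V E) : Prop :=
  ∀ v : V, {e ∈ G.edges | s e = v}.Finite

/-- A sink is a vertex emitting no edges. -/
def IsSink (s : E → V) (G : DGraph V E) (v : V) : Prop :=
  v ∈ G.verts ∧ ∀ e ∈ G.edges, s e ≠ v

/-- A source is a vertex receiving no edges. -/
def IsSource (r : E → V) (G : DGraph V E) (v : V) : Prop :=
  v ∈ G.verts ∧ ∀ e ∈ G.edges, r e ≠ v

/-- A path is a nonempty finite sequence of composable edges of the graph. -/
def IsPath (s r : E → V) (G : DGraph V E) (p : List E) : Prop :=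
  p ≠ [] ∧ (∀ e ∈ p, e ∈ G.edges) ∧ p.Chain' (fun e f => r e = s f)

/-- `PathFromTo s r G p v w` : `p` is a path in `G` with source `v` and range `w`. -/
def PathFromTo (s r : E → V) (G : DGraph V E) (p : List E) (v w : V) : Prop :=
  IsPath s r G p ∧ (∃ e, p.head? = some e ∧ s e = v) ∧
    (∃ e, p.getLast? = some e ∧ r e = w)

/-- `v ≥ w` : `v = w` or there is a path from `v` to `w`. -/
def Reach (s r : E → V) (G : DGraph V E) (v w : V) : Prop :=
  v = w ∨ ∃ p, PathFromTo s r G p v w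

/-- A loop based at `v` is a path with source and range `v`. -/
def IsLoop (s r : E → V) (G : DGraph V E) (p : List E) (v : V) : Prop :=
  PathFromTo s r G p v v

/-- A simple loop returns to its base point exactly once. -/
def IsSimpleLoop (s r : E → V) (G : DGraph V E) (p : List E) (v : V) : Prop :=
  IsLoop s r G p v ∧
    ∀ i (h : i + 1 < p.length), r (p.get ⟨i, Nat.lt_of_succ_lt h⟩) ≠ v

/-- Condition (K): every vertex is the base of no loop or of at least two
distinct simple loops. -/
def ConditionK (s r : E → V) (G : DGraph V E) : Prop :=
  ∀ v ∈ G.verts, (¬ ∃ p, IsLoop s r G p v) ∨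
    ∃ p q, IsSimpleLoop s r G p v ∧ IsSimpleLoop s r G q v ∧ p ≠ q

/-- A maximal tail in `G`. -/
def MaximalTail (s r : E → V) (G : DGraph V E) (γ : Set V) : Prop :=
  γ.Nonempty ∧ γ ⊆ G.verts ∧
  (∀ v ∈ γ, ∀ w ∈ γ, ∃ y ∈ γ, Reach s r G v y ∧ Reach s r G w y) ∧
  (∀ v w, Reach s r G v w → w ∈ γ → v ∈ γ) ∧
  (∀ w ∈ γ, ∃ e ∈ G.edges, s e = w ∧ r e ∈ γ)

/-- `(Eg, v0)` is a 1-sink extension of `G`. -/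
structure OneSinkExt (s r : E → V) (G Eg : DGraph V E) (v0 : V) : Prop where
  wfG : WellFormed s r G
  wfE : WellFormed s r Eg
  sub_verts : G.verts ⊆ Eg.verts
  sub_edges : G.edges ⊆ Eg.edges
  rowfin : RowFinite s Eg
  H_fin : (Eg.verts \ G.verts).Finite
  H_no_sources : ∀ v ∈ Eg.verts \ G.verts, ¬ IsSource r Eg v
  v0_mem : v0 ∈ Eg.verts \ G.verts
  v0_sink : IsSink s Eg v0
  sink_unique : ∀ v ∈ Eg.verts \ G.verts, IsSink s Eg v → v = v0
  no_H_loops : ∀ p v, IsLoop s r Eg p v →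
    ¬ (∀ e ∈ p, s e ∈ Eg.verts \ G.verts ∧ r e ∈ Eg.verts \ G.verts)
  new_edge_range : ∀ e ∈ Eg.edges, e ∉ G.edges → r e ∈ Eg.verts \ G.verts
  sinks_preserved : ∀ v, IsSink s G v → IsSink s Eg v

/-- The closure of the sink `v0` : the union of all maximal tails of `G`
every vertex of which reaches `v0` in `Eg`. -/
def closureSink (s r : E → V) (G Eg : DGraph V E) (v0 : V) : Set V :=
  {v | ∃ γ, MaximalTail s r G γ ∧ (∀ u ∈ γ, Reach s r Eg u v0) ∧ v ∈ γ}

/-- Hereditary subset of vertices. -/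
def Hereditary (s r : E → V) (G : DGraph V E) (K : Set V) : Prop :=
  ∀ e ∈ G.edges, s e ∈ K → r e ∈ K

/-- Saturated subset of vertices. -/
def Saturated (s r : E → V) (G : DGraph V E) (K : Set V) : Prop :=
  ∀ v ∈ G.verts, ¬ IsSink s G v → (∀ e ∈ G.edges, s e = v → r e ∈ K) → v ∈ K

/-- Paths are preserved under graph inclusion. -/
lemma pathFromTo_mono {s r : E → V} {G Eg : DGraph V E}
    (h : G.edges ⊆ Eg.edges) {p : List E} {v w : V}
    (hp : PathFromTo s r G p v w) : PathFromTo s r Eg p v w := by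
  obtain ⟨⟨h1, h2, h3⟩, h4, h5⟩ := hp
  exact ⟨⟨h1, fun e he => h (h2 e he), h3⟩, h4, h5⟩

lemma reach_mono {s r : E → V} {G Eg : DGraph V E}
    (h : G.edges ⊆ Eg.edges) {v w : V} (hvw : Reach s r G v w) :
    Reach s r Eg v w := by
  rcases hvw with h' | ⟨p, hp⟩
  · exact Or.inl h'
  · exact Or.inr ⟨p, pathFromTo_mono h hp⟩

/-- A composable sequence of edges of `Eg` whose last edge has range in `G`
consists entirely of edges of `G`. -/
lemma edges_of_range_in_G {s r : E → V} {G Eg : DGraph V E} {v0 : V}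
    (hext : OneSinkExt s r G Eg v0) :
    ∀ p : List E, (∀ e ∈ p, e ∈ Eg.edges) → p.Chain' (fun e f => r e = s f) →
      ∀ e', p.getLast? = some e' → r e' ∈ G.verts → ∀ e ∈ p, e ∈ G.edges := by
  intro p
  induction p using List.reverseRecOn with
  | nil => intro _ _ e' he'; simp at he'
  | append_singleton q a ih =>
    intro hE hch e' he' hrG e he
    have ha : e' = a := by
      rw [List.getLast?_concat] at he'
      exact (Option.some.inj he').symm
    rw [ha] at hrG
    have haG : a ∈ G.edges := by
      by_contra haG
      exact (hext.new_edge_range a (hE a (by simp)) haG).2 hrG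
    rcases List.mem_append.mp he with heq | hea
    · -- e is in q
      rcases List.eq_nil_or_concat q with rfl | ⟨q', b, hq⟩
      · simp at heq
      · rw [List.concat_eq_append] at hq
        subst hq
        -- last of q is b, with r b = s a ∈ G.verts
        have hchq : (q' ++ [b]).Chain' (fun e f => r e = s f) :=
          (List.isChain_append.mp hch).1
        have hrel : r b = s a := by
          have := (List.isChain_append.mp hch).2.2
          exact this b (by rw [List.getLast?_concat]; rfl) a rfl
        have hsa : s a ∈ G.verts := (hext.wfG a haG).1
        exact ih (fun e he => hE e (List.mem_append_left _ he))
          hchq b List.getLast?_concat (hrel ▸ hsa) e heq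
    · simp at hea; subst hea; exact haG

lemma pathFromTo_back {s r : E → V} {G Eg : DGraph V E} {v0 : V}
    (hext : OneSinkExt s r G Eg v0) {p : List E} {v w : V}
    (hp : PathFromTo s r Eg p v w) (hw : w ∈ G.verts) :
    PathFromTo s r G p v w := by
  obtain ⟨⟨h1, h2, h3⟩, h4, e', he', hre'⟩ := hp
  exact ⟨⟨h1, edges_of_range_in_G hext p h2 h3 e' he' (hre' ▸ hw), h3⟩,
    h4, e', he', hre'⟩

lemma reach_back {s r : E → V} {G Eg : DGraph V E} {v0 : V}
    (hext : OneSinkExt s r G Eg v0) {v w : V}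
    (hvw : Reach s r Eg v w) (hw : w ∈ G.verts) : Reach s r G v w := by
  rcases hvw with h' | ⟨p, hp⟩
  · exact Or.inl h'
  · exact Or.inr ⟨p, pathFromTo_back hext hp hw⟩

/-- For a 1-sink extension `(Eg, v0)` of a row-finite graph `G`,
every maximal tail of `Eg` is contained in `G^0`, and a subset `γ ⊆ G^0` is a
maximal tail in `Eg` iff it is a maximal tail in `G`. -/
theorem maximalTails_of_extension
    (s r : E → V) (G Eg : DGraph V E) (v0 : V)
    (hGrf : RowFinite s G)
    (hext : OneSinkExt s r G Eg v0) :
    (∀ γ : Set V, MaximalTail s r Eg γ → γ ⊆ G.verts) ∧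
    (∀ γ : Set V, γ ⊆ G.verts →
      (MaximalTail s r Eg γ ↔ MaximalTail s r G γ)) := by
  have part1 : ∀ γ : Set V, MaximalTail s r Eg γ → γ ⊆ G.verts := by
    intro γ hγ v hv
    by_contra hvG
    obtain ⟨hne, hsub, hcof, hher, hiii⟩ := hγ
    set S : Set V := {u | u ∈ γ ∧ u ∉ G.verts} with hS
    have hSsub : S ⊆ Eg.verts \ G.verts := fun u hu => ⟨hsub hu.1, hu.2⟩
    have hSfin : S.Finite := hext.H_fin.subset hSsub
    have key : ∀ u : S, ∃ e, e ∈ Eg.edges ∧ s e = (u : V) ∧ r e ∈ S := by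
      rintro ⟨u, hu1, hu2⟩
      obtain ⟨e, he, hse, hre⟩ := hiii u hu1
      refine ⟨e, he, hse, hre, ?_⟩
      intro hrG
      by_cases heG : e ∈ G.edges
      · exact hu2 (hse ▸ (hext.wfG e heG).1)
      · exact (hext.new_edge_range e he heG).2 hrG
    choose ed hed1 hed2 hed3 using key
    set nxt : S → S := fun u => ⟨r (ed u), hed3 u⟩ with hnxt
    set f : ℕ → S := fun n => nxt^[n] ⟨v, hv, hvG⟩ with hf
    have hfs : ∀ n, f (n + 1) = nxt (f n) := fun n =>
      Function.iterate_succ_apply' nxt n _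
    have hsrc : ∀ n, s (ed (f n)) = (f n : V) := fun n => hed2 (f n)
    have hrng : ∀ n, r (ed (f n)) = (f (n + 1) : V) := by
      intro n; rw [hfs n]
    haveI := hSfin.to_subtype
    have main : ∀ i j : ℕ, i < j → f i = f j → False := by
      intro i j hij hfe
      obtain ⟨d, hd⟩ : ∃ d, j = i + (d + 1) :=
        ⟨j - i - 1, by omega⟩
      set p : List E := (List.range (d + 1)).map (fun k => ed (f (i + k)))
        with hp
      have hlen : p.length = d + 1 := by simp [hp]
      have hget : ∀ k (hk : k < p.length), p.get ⟨k, hk⟩ = ed (f (i + k)) := by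
        intro k hk
        simp [hp]
      have hmem : ∀ a ∈ p, ∃ k, k < d + 1 ∧ a = ed (f (i + k)) := by
        intro a ha
        rw [hp, List.mem_map] at ha
        obtain ⟨k, hk, rfl⟩ := ha
        exact ⟨k, List.mem_range.mp hk, rfl⟩
      have hloop : IsLoop s r Eg p (f i : V) := by
        refine ⟨⟨?_, ?_, ?_⟩, ?_, ?_⟩
        · intro h; apply_fun List.length at h; simp [hlen] at h
        · intro a ha
          obtain ⟨k, _, rfl⟩ := hmem a ha
          exact hed1 _
        · change List.IsChain _ p; rw [List.isChain_iff_getElem]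
          intro k hk
          rw [show p[k] = p.get ⟨k, by omega⟩ from rfl,
            show p[k + 1] = p.get ⟨k + 1, hk⟩ from rfl, hget, hget]
          rw [hrng, hsrc]
          ring_nf
        · refine ⟨ed (f i), ?_, by rw [hsrc]⟩
          rw [hp, List.range_succ_eq_map]
          simp
        · refine ⟨ed (f (i + d)), ?_, ?_⟩
          · rw [hp, List.range_succ, List.map_append]
            simp [List.getLast?_concat]
          · rw [hrng]
            have : i + d + 1 = j := by omega
            rw [this, ← hfe]
      apply hext.no_H_loops p (f i : V) hloop
      intro a ha
      obtain ⟨k, _, rfl⟩ := hmem a ha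
      rw [hsrc, hrng]
      exact ⟨hSsub (f (i + k)).2, hSsub (f (i + k + 1)).2⟩
    obtain ⟨i, j, hij, hfe⟩ := Finite.exists_ne_map_eq_of_infinite f
    rcases hij.lt_or_gt with h | h
    · exact main i j h hfe
    · exact main j i h hfe.symm
  refine ⟨part1, fun γ hγsub => ⟨?_, ?_⟩⟩
  · rintro ⟨hne, _, hcof, hher, hiii⟩
    refine ⟨hne, hγsub, ?_, ?_, ?_⟩
    · intro v hv w hw
      obtain ⟨y, hy, h1, h2⟩ := hcof v hv w hw
      exact ⟨y, hy, reach_back hext h1 (hγsub hy), reach_back hext h2 (hγsub hy)⟩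
    · intro v w hvw hw
      exact hher v w (reach_mono hext.sub_edges hvw) hw
    · intro w hw
      obtain ⟨e, he, hse, hre⟩ := hiii w hw
      refine ⟨e, ?_, hse, hre⟩
      by_contra heG
      exact (hext.new_edge_range e he heG).2 (hγsub hre)
  · rintro ⟨hne, _, hcof, hher, hiii⟩
    refine ⟨hne, hγsub.trans hext.sub_verts, ?_, ?_, ?_⟩
    · intro v hv w hw
      obtain ⟨y, hy, h1, h2⟩ := hcof v hv w hw
      exact ⟨y, hy, reach_mono hext.sub_edges h1, reach_mono hext.sub_edges h2⟩
    · intro v w hvw hw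
      exact hher v w (reach_back hext hvw (hγsub hw)) hw
    · intro w hw
      obtain ⟨e, he, hse, hre⟩ := hiii w hw
      exact ⟨e, hext.sub_edges he, hse, hre⟩
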